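/- If a subgroup of S_d generated by permutations σ₁, …, σ_k acts transitively on {1, …, d} with d ≥ 1, then N(σ₁) + ⋯ + N(σ_k) ≥ d − 1, where N(σ) = d − (number of cycles of σ). -/

import Mathlib

/-- The number of cycles of a permutation, counting fixed points as cycles. -/
def numCycles {d : ℕ} (π : Equiv.Perm (Fin d)) : ℕ :=
  Multiset.card π.cycleType + (Finset.univ.filter fun x => π x = x).card

/-- `N(π) = d -` (number of cycles of `π`, counting fixed points). -/
def NN {d : ℕ} (π : Equiv.Perm (Fin d)) : ℕ := d - numCycles π

open Equiv Equiv.Perm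

/-- A cycle is a product of `support.card - 1` swaps. -/
lemma cycle_swap_factors {d : ℕ} (n : ℕ) (f : Perm (Fin d)) (hf : f.IsCycle)
    (hn : f.support.card ≤ n) :
    ∃ l : List (Perm (Fin d)), (∀ τ ∈ l, τ.IsSwap) ∧ l.prod = f ∧
      l.length + 1 ≤ f.support.card := by
  induction n generalizing f with
  | zero =>
    exact absurd (le_trans hf.two_le_card_support hn) (by omega)
  | succ n ih =>
    obtain ⟨x, hx, -⟩ := id hf
    by_cases hffx : f (f x) = x
    · refine ⟨[Equiv.swap x (f x)], ?_, ?_, ?_⟩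
      · intro τ hτ
        simp only [List.mem_singleton] at hτ
        exact hτ ▸ ⟨x, f x, Ne.symm hx, rfl⟩
      · rw [List.prod_singleton]
        exact (hf.eq_swap_of_apply_apply_eq_self hx hffx).symm
      · simpa using hf.two_le_card_support
    · have hg : IsCycle (Equiv.swap x (f x) * f) := hf.swap_mul hx hffx
      have hcard : (Equiv.swap x (f x) * f).support.card < f.support.card :=
        card_support_swap_mul hx
      obtain ⟨l, hls, hlp, hll⟩ := ih _ hg (by omega)
      refine ⟨Equiv.swap x (f x) :: l, ?_, ?_, by simp; omega⟩
      · intro τ hτ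
        rcases List.mem_cons.1 hτ with h | h
        · exact h ▸ ⟨x, f x, Ne.symm hx, rfl⟩
        · exact hls τ h
      · simp only [List.prod_cons, hlp]
        rw [← mul_assoc, Equiv.swap_mul_self, one_mul]

/-- A list of cycles multiplies to a product of swaps with length bound. -/
lemma cycles_swap_factors {d : ℕ} (c : List (Perm (Fin d))) (hc : ∀ g ∈ c, g.IsCycle) :
    ∃ l : List (Perm (Fin d)), (∀ τ ∈ l, τ.IsSwap) ∧ l.prod = c.prod ∧
      l.length + c.length ≤ (c.map fun g => g.support.card).sum := by
  induction c with
  | nil => exact ⟨[], by simp, by simp, by simp⟩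
  | cons g c' ih =>
    obtain ⟨l', hl's, hl'p, hl'l⟩ := ih (fun g hg => hc g (List.mem_cons_of_mem _ hg))
    obtain ⟨lg, hlgs, hlgp, hlgl⟩ :=
      cycle_swap_factors g.support.card g (hc g List.mem_cons_self) le_rfl
    refine ⟨lg ++ l', ?_, ?_, ?_⟩
    · intro τ hτ
      rcases List.mem_append.1 hτ with h | h
      · exact hlgs τ h
      · exact hl's τ h
    · rw [List.prod_append, hlgp, hl'p, List.prod_cons]
    · simp only [List.length_append, List.length_cons, List.map_cons, List.sum_cons]
      omega

/-- Every permutation is a product of at most `NN f` swaps. -/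
lemma perm_swap_factors {d : ℕ} (f : Perm (Fin d)) :
    ∃ l : List (Perm (Fin d)), (∀ τ ∈ l, τ.IsSwap) ∧ l.prod = f ∧ l.length ≤ NN f := by
  obtain ⟨c, hcp, hcc, hcd⟩ := f.truncCycleFactors.out
  obtain ⟨l, hls, hlp, hll⟩ := cycles_swap_factors c hcc
  refine ⟨l, hls, hlp.trans hcp, ?_⟩
  have hct : f.cycleType = c.map (Finset.card ∘ support) := cycleType_eq c hcp hcc hcd
  have hsum : f.cycleType.sum = f.support.card := sum_cycleType f
  have h1 : f.cycleType.sum = (c.map fun g => g.support.card).sum := by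
    rw [hct]; simp [Function.comp_def]
  have h2 : (Multiset.card f.cycleType : ℕ) = c.length := by rw [hct]; simp
  have hsupd : f.support.card ≤ d := le_trans (Finset.card_le_univ _) (by simp)
  have hfix : f.support.card + (Finset.univ.filter fun x => f x = x).card = d := by
    have := Finset.card_filter_add_card_filter_not
      (s := (Finset.univ : Finset (Fin d))) (p := fun x => f x ≠ x)
    simp only [Finset.card_univ, Fintype.card_fin, not_not] at this
    have hsupp : f.support = Finset.univ.filter fun x => f x ≠ x := rfl
    rw [hsupp, this]
  unfold NN numCycles
  omega

/-- The orbit equivalence relation of the closure of a set of permutations. -/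
def orbRel {d : ℕ} (S : Set (Perm (Fin d))) : Setoid (Fin d) where
  r x y := ∃ g ∈ Subgroup.closure S, g x = y
  iseqv := by
    constructor
    · exact fun x => ⟨1, one_mem _, rfl⟩
    · rintro x y ⟨g, hg, rfl⟩
      exact ⟨g⁻¹, inv_mem hg, by simp⟩
    · rintro x y z ⟨g, hg, rfl⟩ ⟨h, hh, rfl⟩
      exact ⟨h * g, mul_mem hh hg, rfl⟩

/-- Key counting lemma: a group generated by `m` swaps has at least `d - m` orbits. -/
lemma key_lemma {d : ℕ} (L : List (Perm (Fin d))) (hL : ∀ τ ∈ L, τ.IsSwap) :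
    d ≤ Nat.card (Quotient (orbRel {g | g ∈ L})) + L.length := by
  induction L with
  | nil =>
    have hbot : Subgroup.closure ({g | g ∈ ([] : List (Perm (Fin d)))}) = ⊥ := by
      have he : {g : Equiv.Perm (Fin d) | g ∈ ([] : List (Equiv.Perm (Fin d)))} = ∅ := by
        simp
      rw [he, Subgroup.closure_empty]
    have hinj : Function.Bijective (Quotient.mk (orbRel {g | g ∈ ([] : List (Perm (Fin d)))})) := by
      constructor
      · intro x y h
        obtain ⟨g, hg, hgx⟩ := Quotient.exact h
        rw [hbot, Subgroup.mem_bot] at hg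
        subst hg; simpa using hgx
      · exact Quotient.mk_surjective
    rw [← Nat.card_eq_of_bijective _ hinj]
    simp
  | cons τ L' ih =>
    obtain ⟨a, b, hab, rfl⟩ := hL τ List.mem_cons_self
    have ih' := ih (fun τ hτ => hL τ (List.mem_cons_of_mem _ hτ))
    set A := orbRel (d := d) {g | g ∈ L'} with hA
    set B := orbRel (d := d) {g | g ∈ Equiv.swap a b :: L'} with hB
    -- the coarser relation R: merge the classes of a and b in A
    set C : Fin d → Prop := fun x => A.r x a ∨ A.r x b with hC
    have hCsymm : ∀ {x y : Fin d}, A.r x y → C y → C x := by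
      rintro x y hxy (h | h)
      · exact Or.inl (A.trans hxy h)
      · exact Or.inr (A.trans hxy h)
    set R : Setoid (Fin d) := {
      r := fun x y => A.r x y ∨ (C x ∧ C y)
      iseqv := by
        constructor
        · exact fun x => Or.inl (A.refl x)
        · rintro x y (h | ⟨h1, h2⟩)
          · exact Or.inl (A.symm h)
          · exact Or.inr ⟨h2, h1⟩
        · rintro x y z (hxy | ⟨h1, h2⟩) (hyz | ⟨h3, h4⟩)
          · exact Or.inl (A.trans hxy hyz)
          · exact Or.inr ⟨hCsymm hxy h3, h4⟩
          · exact Or.inr ⟨h1, hCsymm (A.symm hyz) h2⟩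
          · exact Or.inr ⟨h1, h4⟩ } with hR
    -- B.r implies R.r
    have hBR : ∀ x y : Fin d, B.r x y → R.r x y := by
      rintro x y ⟨g, hg, rfl⟩
      revert x
      refine Subgroup.closure_induction (p := fun g _ => ∀ x, R.r x (g x)) ?_ ?_ ?_ ?_ hg
      · intro g hg x
        rcases List.mem_cons.1 hg with rfl | hg'
        · by_cases hxa : x = a
          · rw [hxa, Equiv.swap_apply_left]
            exact Or.inr ⟨Or.inl (A.refl a), Or.inr (A.refl b)⟩
          by_cases hxb : x = b
          · rw [hxb, Equiv.swap_apply_right]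
            exact Or.inr ⟨Or.inr (A.refl b), Or.inl (A.refl a)⟩
          · simpa [Equiv.swap_apply_of_ne_of_ne hxa hxb] using R.refl x
        · exact Or.inl ⟨g, Subgroup.subset_closure hg', rfl⟩
      · intro x; exact R.refl x
      · intro g h _ _ pg ph x
        exact R.trans (ph x) (pg (h x))
      · intro g _ pg x
        exact R.symm (by simpa using pg (g⁻¹ x))
    -- surjection Quot B → Quot R
    have hsurj : Nat.card (Quotient R) ≤ Nat.card (Quotient B) := by
      have : Function.Surjective
          (Quotient.map' (s₁ := B) (s₂ := R) id (fun x y h => hBR x y h)) := by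
        intro q
        obtain ⟨x, rfl⟩ := Quotient.exists_rep q
        exact ⟨Quotient.mk'' x, rfl⟩
      exact Nat.card_le_card_of_surjective _ this
    -- injection Quot A → Option (Quot R)
    have hAR : ∀ x y : Fin d, A.r x y → R.r x y := fun x y h => Or.inl h
    have hinj : Nat.card (Quotient A) ≤ Nat.card (Quotient R) + 1 := by
      classical
      set π : Quotient A → Quotient R :=
        Quotient.map' (s₁ := A) (s₂ := R) id (fun x y h => hAR x y h) with hπ
      set G : Quotient A → Option (Quotient R) := fun q =>
        if q = Quotient.mk A b then none else some (π q) with hG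
      have hGinj : Function.Injective G := by
        intro q q' hqq'
        simp only [hG] at hqq'
        by_cases h1 : q = Quotient.mk A b
        · by_cases h2 : q' = Quotient.mk A b
          · rw [h1, h2]
          · rw [if_pos h1, if_neg h2] at hqq'
            exact absurd hqq' (by simp)
        by_cases h2 : q' = Quotient.mk A b
        · rw [if_pos h2, if_neg h1] at hqq'
          exact absurd hqq' (by simp)
        rw [if_neg h1, if_neg h2, Option.some_inj] at hqq'
        obtain ⟨x, rfl⟩ := Quotient.exists_rep q
        obtain ⟨y, rfl⟩ := Quotient.exists_rep q'
        have hrel : R.r x y := Quotient.exact hqq'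
        · rcases hrel with h | ⟨hx, hy⟩
          · exact Quotient.sound h
          · -- x and y are each related to a or b in A
            have hxab : A.r x a := by
              rcases hx with h | h
              · exact h
              · exact absurd (Quotient.sound h) h1
            have hyab : A.r y a := by
              rcases hy with h | h
              · exact h
              · exact absurd (Quotient.sound h) h2
            exact Quotient.sound (A.trans hxab (A.symm hyab))
      calc Nat.card (Quotient A) ≤ Nat.card (Option (Quotient R)) :=
            Nat.card_le_card_of_injective G hGinj
        _ = Nat.card (Quotient R) + 1 := by
            letI : Fintype (Quotient R) := Fintype.ofFinite _
            rw [Nat.card_eq_fintype_card, Nat.card_eq_fintype_card, Fintype.card_option]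
    have hlen : (Equiv.swap a b :: L').length = L'.length + 1 := rfl
    omega

theorem stmt4 (d k : ℕ) (hd : 1 ≤ d) (σ : Fin k → Equiv.Perm (Fin d))
    (htrans : ∀ x y : Fin d, ∃ g ∈ Subgroup.closure (Set.range σ), g x = y) :
    d - 1 ≤ ∑ i, NN (σ i) := by
  classical
  choose l hlswap hlprod hllen using fun i => perm_swap_factors (σ i)
  set L : List (Perm (Fin d)) := (List.ofFn l).flatten with hLdef
  have hLswap : ∀ τ ∈ L, τ.IsSwap := by
    intro τ hτ
    rw [hLdef, List.mem_flatten] at hτ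
    obtain ⟨l', hl', hτl'⟩ := hτ
    obtain ⟨i, rfl⟩ := List.mem_ofFn.1 hl'
    exact hlswap i τ hτl'
  have hLlen : L.length ≤ ∑ i, NN (σ i) := by
    rw [hLdef, List.length_flatten, List.map_ofFn]
    rw [List.sum_ofFn]
    exact Finset.sum_le_sum fun i _ => hllen i
  -- each σ i lies in the closure of the swaps
  have hsub : Subgroup.closure (Set.range σ) ≤ Subgroup.closure {g | g ∈ L} := by
    rw [Subgroup.closure_le]
    rintro _ ⟨i, rfl⟩
    rw [← hlprod i]
    apply Subgroup.list_prod_mem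
    intro x hx
    apply Subgroup.subset_closure
    show x ∈ L
    rw [hLdef]
    exact List.mem_flatten.2 ⟨l i, List.mem_ofFn.2 ⟨i, rfl⟩, hx⟩
  -- the quotient is a subsingleton
  have hsub' : Subsingleton (Quotient (orbRel (d := d) {g | g ∈ L})) := by
    constructor
    intro q q'
    obtain ⟨x, rfl⟩ := Quotient.exists_rep q
    obtain ⟨y, rfl⟩ := Quotient.exists_rep q'
    obtain ⟨g, hg, hgx⟩ := htrans x y
    exact Quotient.sound ⟨g, hsub hg, hgx⟩
  have hcard : Nat.card (Quotient (orbRel (d := d) {g | g ∈ L})) ≤ 1 := by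
    have h := Nat.card_le_card_of_injective
      (α := Quotient (orbRel (d := d) {g | g ∈ L})) (β := Unit)
      (fun _ => ()) (fun a b _ => Subsingleton.elim a b)
    simpa using h
  have := key_lemma L hLswap
  omega
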